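/- arXiv:1912.12415 — 2 statements merged into one kernel-verified Lean document; each statement's English description precedes it below -/
import Mathlib

section
/- Let G be a group and let α and β be tensor commuting automorphisms of G. Then for every integer n ≥ 0, the automorphisms (α ∘ β)ⁿ ∘ α and β ∘ (α ∘ β)ⁿ are tensor commuting automorphisms of G. -/
/-!
Non-abelian tensor square `G ⊗ G`, constructed as the presented group on
symbols `g ⊗ h` with the defining relations
`g*g' ⊗ h = (g^{g'} ⊗ h^{g'}) * (g' ⊗ h)` and
`g ⊗ h*h' = (g ⊗ h') * (g^{h'} ⊗ h^{h'})`, where `a ^ b = b⁻¹ * a * b`.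
-/

variable {G : Type*} [Group G]

/-- Defining relations of the non-abelian tensor square `G ⊗ G`. -/
def tensorRels (G : Type*) [Group G] : Set (FreeGroup (G × G)) :=
  {r | (∃ g g' h : G,
      r = FreeGroup.of (g * g', h) *
        (FreeGroup.of (g'⁻¹ * g * g', g'⁻¹ * h * g') * FreeGroup.of (g', h))⁻¹) ∨
    (∃ g h h' : G,
      r = FreeGroup.of (g, h * h') *
        (FreeGroup.of (g, h') * FreeGroup.of (h'⁻¹ * g * h', h'⁻¹ * h * h'))⁻¹)}

/-- The non-abelian tensor square `G ⊗ G`. -/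
abbrev TensorSquare (G : Type*) [Group G] := PresentedGroup (tensorRels G)

/-- The tensor `g ⊗ h` as an element of `G ⊗ G`. -/
def tmul (g h : G) : TensorSquare G := PresentedGroup.of (g, h)

theorem tensorRels_eq_one {r : FreeGroup (G × G)} (hr : r ∈ tensorRels G) :
    PresentedGroup.mk (tensorRels G) r = 1 :=
  (QuotientGroup.eq_one_iff r).mpr (Subgroup.subset_normalClosure hr)

/-- The first defining relation of `G ⊗ G`. -/
theorem tmul_rel₁ (g g' h : G) :
    tmul (g * g') h = tmul (g'⁻¹ * g * g') (g'⁻¹ * h * g') * tmul g' h := by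
  have h1 := tensorRels_eq_one (G := G) (Or.inl ⟨g, g', h, rfl⟩)
  rw [map_mul, map_inv, map_mul, mul_inv_eq_one] at h1
  exact h1

/-- The second defining relation of `G ⊗ G`. -/
theorem tmul_rel₂ (g h h' : G) :
    tmul g (h * h') = tmul g h' * tmul (h'⁻¹ * g * h') (h'⁻¹ * h * h') := by
  have h1 := tensorRels_eq_one (G := G) (Or.inr ⟨g, h, h', rfl⟩)
  rw [map_mul, map_inv, map_mul, mul_inv_eq_one] at h1
  exact h1

/-- The action of `x : G` on `G ⊗ G`, determined by `(g ⊗ h) ^ x = (x⁻¹*g*x) ⊗ (x⁻¹*h*x)`. -/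
def tensorAct (x : G) : TensorSquare G →* TensorSquare G :=
  PresentedGroup.toGroup
    (f := fun p : G × G => tmul (x⁻¹ * p.1 * x) (x⁻¹ * p.2 * x))
    (by
      rintro r (⟨g, g', h, rfl⟩ | ⟨g, h, h', rfl⟩) <;>
        simp only [map_mul, map_inv, FreeGroup.lift_apply_of, mul_inv_eq_one]
      · have := tmul_rel₁ (x⁻¹ * g * x) (x⁻¹ * g' * x) (x⁻¹ * h * x)
        convert this using 2 <;> group
      · have := tmul_rel₂ (x⁻¹ * g * x) (x⁻¹ * h * x) (x⁻¹ * h' * x)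
        convert this using 2 <;> group)

@[simp] theorem tensorAct_tmul (x g h : G) :
    tensorAct x (tmul g h) = tmul (x⁻¹ * g * x) (x⁻¹ * h * x) :=
  PresentedGroup.toGroup.of _

/-- An automorphism `α` of `G` is tensor commuting if `g ⊗ α g = 1` for all `g`. -/
def IsTensorCommuting (α : G ≃* G) : Prop := ∀ g : G, tmul g (α g) = 1

/-- An automorphism `α` of `G` is tensor central if `[x, α] = x⁻¹ * α x` lies in the
tensor center of `G`, i.e. `(x⁻¹ * α x) ⊗ y = 1` for all `x y`. -/
def IsTensorCentral (α : G ≃* G) : Prop := ∀ x y : G, tmul (x⁻¹ * α x) y = 1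

/-- The inner automorphism `T_g : x ↦ x ^ g = g⁻¹ * x * g` of `G` induced by `g`. -/
def innerAut (g : G) : G ≃* G := MulAut.conj g⁻¹

-- NEW STUFF BELOW

def tensorSwap : TensorSquare G →* TensorSquare G :=
  PresentedGroup.toGroup (f := fun p : G × G => (tmul p.2 p.1)⁻¹)
    (by
      rintro r (⟨g, g', h, rfl⟩ | ⟨g, h, h', rfl⟩) <;>
        simp only [map_mul, map_inv, FreeGroup.lift_apply_of, mul_inv_rev, inv_inv]
      · rw [tmul_rel₂ h g g']; group
      · rw [tmul_rel₁ h h' g]; group)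

@[simp] theorem tensorSwap_tmul (g h : G) : tensorSwap (tmul g h) = (tmul h g)⁻¹ :=
  PresentedGroup.toGroup.of _

theorem tmul_symm {g h : G} (hgh : tmul g h = 1) : tmul h g = 1 := by
  have := congrArg tensorSwap hgh
  rwa [tensorSwap_tmul, map_one, inv_eq_one] at this

theorem tensorAct_inv_tensorAct (x : G) (t : TensorSquare G) :
    tensorAct x⁻¹ (tensorAct x t) = t := by
  have : (tensorAct x⁻¹).comp (tensorAct x) = MonoidHom.id (TensorSquare G) := by
    ext ⟨g, h⟩
    show tensorAct x⁻¹ (tensorAct x (tmul g h)) = tmul g h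
    simp [mul_assoc]
  exact DFunLike.congr_fun this t

theorem star_rel {α : G ≃* G} (hα : IsTensorCommuting α) (g h : G) :
    tensorAct h (tmul g (α h)) * tensorAct (α h) (tmul h (α g)) = 1 := by
  have e1 : tmul (g * h) (α g * α h) = 1 := by
    have := hα (g * h); rwa [map_mul] at this
  have e2 : tmul (g * h) (α g * α h)
      = tmul (g * h) (α h) * tensorAct (α h) (tmul (g * h) (α g)) := by
    rw [tensorAct_tmul]; exact tmul_rel₂ _ _ _
  have e3 : tmul (g * h) (α h) = tensorAct h (tmul g (α h)) := by
    rw [tmul_rel₁ g h (α h), hα h, mul_one, tensorAct_tmul]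
  have e4 : tmul (g * h) (α g) = tmul h (α g) := by
    rw [tmul_rel₁ g h (α g)]
    have : tmul (h⁻¹ * g * h) (h⁻¹ * α g * h) = tensorAct h (tmul g (α g)) :=
      (tensorAct_tmul h g (α g)).symm
    rw [this, hα g, map_one, one_mul]
  rw [e2, e3, e4] at e1
  exact e1

theorem tmul_cancel {α : G ≃* G} (hα : IsTensorCommuting α) {g h : G}
    (hh : tmul h (α g) = 1) : tmul g (α h) = 1 := by
  have h1 := star_rel hα g h
  rw [hh, map_one, mul_one] at h1
  have h2 := congrArg (tensorAct h⁻¹) h1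
  rwa [tensorAct_inv_tensorAct, map_one] at h2

theorem key {α φ : G ≃* G} (hα : IsTensorCommuting α) (hφ : IsTensorCommuting φ) :
    IsTensorCommuting (α * φ * α) := by
  intro g
  have h1 : tmul (φ (α g)) (α g) = 1 := tmul_symm (hφ (α g))
  have h2 := tmul_cancel hα h1
  show tmul g ((α * φ * α) g) = 1
  rw [MulAut.mul_apply, MulAut.mul_apply]
  exact h2


/-- If `α, β` are tensor commuting automorphisms of `G`, then for all `n ≥ 0`,
`(α ∘ β)ⁿ ∘ α` and `β ∘ (α ∘ β)ⁿ` are tensor commuting automorphisms. -/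
theorem stmt_6 (G : Type*) [Group G] (α β : G ≃* G)
    (hα : IsTensorCommuting α) (hβ : IsTensorCommuting β) (n : ℕ) :
    IsTensorCommuting ((α * β) ^ n * α) ∧ IsTensorCommuting (β * (α * β) ^ n) := by
  induction n with
  | zero => simpa using ⟨hα, hβ⟩
  | succ n ih =>
    obtain ⟨h1, h2⟩ := ih
    constructor
    · have e : (α * β) ^ (n + 1) * α = α * (β * (α * β) ^ n) * α := by
        rw [pow_succ']; group
      rw [e]; exact key hα h2
    · have e : β * (α * β) ^ (n + 1) = β * ((α * β) ^ n * α) * β := by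
        rw [pow_succ]; group
      rw [e]; exact key hβ h1
end

section
/- Let G be a group. Then the set Aut_c^⊗(G) ∩ Inn(G) of inner automorphisms of G that are tensor central automorphisms is a subgroup of Aut(G), and it is isomorphic to the quotient group Z_2^⊗(G)/Z(G) via the map induced by g ↦ T_g, where T_g(x) = g⁻¹xg. -/
/-!
Non-abelian tensor square `G ⊗ G`, constructed as the presented group on
symbols `g ⊗ h` with the defining relations
`g*g' ⊗ h = (g^{g'} ⊗ h^{g'}) * (g' ⊗ h)` and
`g ⊗ h*h' = (g ⊗ h') * (g^{h'} ⊗ h^{h'})`, where `a ^ b = b⁻¹ * a * b`.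
-/

variable {G : Type*} [Group G]

/-- The commutator homomorphism `κ : G ⊗ G →* G`, `g ⊗ h ↦ g⁻¹h⁻¹gh`. -/
def tensorComm : TensorSquare G →* G :=
  PresentedGroup.toGroup
    (f := fun p : G × G => p.1⁻¹ * p.2⁻¹ * p.1 * p.2)
    (by
      rintro r (⟨g, g', h, rfl⟩ | ⟨g, h, h', rfl⟩) <;>
        simp only [map_mul, map_inv, FreeGroup.lift_apply_of, mul_inv_eq_one] <;> group)

@[simp] theorem tensorComm_tmul (g h : G) :
    tensorComm (tmul g h) = g⁻¹ * h⁻¹ * g * h :=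
  PresentedGroup.toGroup.of _

theorem tmul_one_left (h : G) : tmul (1 : G) h = 1 := by
  have key := tmul_rel₁ (1 : G) (1 : G) h
  simp only [mul_one, one_mul, inv_one] at key
  exact right_eq_mul.mp key

theorem tmul_inv_left {w : G} (hw : ∀ h : G, tmul w h = 1) (h : G) :
    tmul w⁻¹ h = 1 := by
  have key := tmul_rel₁ w⁻¹ w (w * h * w⁻¹)
  rw [inv_mul_cancel, tmul_one_left, hw, mul_one] at key
  have h1 : w⁻¹ * w⁻¹ * w = w⁻¹ := by group
  have h2 : w⁻¹ * (w * h * w⁻¹) * w = h := by group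
  rw [h1, h2] at key
  exact key.symm

theorem comm_of_tmul_eq_one {w : G} (hw : ∀ h : G, tmul w h = 1) (y : G) :
    w * y = y * w := by
  have key := congrArg tensorComm (hw y)
  simp only [tensorComm_tmul, map_one] at key
  calc w * y = y * w * (w⁻¹ * y⁻¹ * w * y) := by group
    _ = y * w := by rw [key, mul_one]

theorem conj_mul_central {u c : G} (hc : ∀ y : G, c * y = y * c) (x : G) :
    (u * c)⁻¹ * x * (u * c) = u⁻¹ * x * u := by
  have h1 : (u * c)⁻¹ * x * (u * c) = c⁻¹ * ((u⁻¹ * x * u) * c) := by group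
  rw [h1, ← hc (u⁻¹ * x * u)]
  group

/-- The set of inner automorphisms of `G` that are tensor central is a subgroup of
`Aut G`, isomorphic to `Z₂⊗(G)/Z(G)` via the map induced by `g ↦ T_g`. Here `Z` is the
second tensor center `Z₂⊗(G)` as a subgroup of `G`. -/
theorem stmt_18 (G : Type*) [Group G]
    (Z : Subgroup G)
    (hZ : (Z : Set G) = {a : G | ∀ g h : G, tmul (a⁻¹ * g⁻¹ * a * g) h = 1}) :
    ∃ S : Subgroup (G ≃* G),
      (S : Set (G ≃* G)) = {α : G ≃* G | IsTensorCentral α ∧ ∃ g : G, α = innerAut g} ∧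
      ∃ φ : Z ⧸ (Subgroup.center G).subgroupOf Z ≃* S,
        ∀ a : Z, (φ (QuotientGroup.mk a) : G ≃* G) = innerAut (a : G) := by
  have hmem : ∀ a : G, a ∈ Z ↔ ∀ g h : G, tmul (a⁻¹ * g⁻¹ * a * g) h = 1 := by
    intro a
    constructor
    · intro ha
      exact (Set.ext_iff.mp hZ a).mp ha
    · intro ha
      exact (Set.ext_iff.mp hZ a).mpr ha
  have hinner : ∀ a x : G, innerAut a x = a⁻¹ * x * a := by
    intro a x
    simp [innerAut, MulAut.conj_apply]
  have hcomm : ∀ a : G, a ∈ Z → ∀ g y : G,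
      (a⁻¹ * g⁻¹ * a * g) * y = y * (a⁻¹ * g⁻¹ * a * g) := by
    intro a ha g y
    exact comm_of_tmul_eq_one (fun h => (hmem a).mp ha g h) y
  have hmul : ∀ a b : Z, innerAut (((a * b : Z) : G)) = innerAut (a : G) * innerAut (b : G) := by
    intro a b
    ext x
    have hc : ∀ y : G, ((b:G)⁻¹ * (a:G)⁻¹ * b * a) * y = y * ((b:G)⁻¹ * (a:G)⁻¹ * b * a) := by
      intro y
      have h1 := hcomm (a : G) a.2 (b : G)
      have h2 : ((b:G)⁻¹ * (a:G)⁻¹ * b * a) = ((a:G)⁻¹ * (b:G)⁻¹ * a * b)⁻¹ := by group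
      rw [h2]
      have h3 := h1 y⁻¹
      calc ((a:G)⁻¹ * (b:G)⁻¹ * a * b)⁻¹ * y
          = (y⁻¹ * ((a:G)⁻¹ * (b:G)⁻¹ * a * b))⁻¹ := by group
        _ = (((a:G)⁻¹ * (b:G)⁻¹ * a * b) * y⁻¹)⁻¹ := by rw [h3]
        _ = y * ((a:G)⁻¹ * (b:G)⁻¹ * a * b)⁻¹ := by group
    have hba : (b : G) * a = ((a : G) * b) * ((b:G)⁻¹ * (a:G)⁻¹ * b * a) := by group
    show innerAut (((a:G)) * b) x = innerAut (a : G) (innerAut (b : G) x)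
    rw [hinner, hinner, hinner]
    have goal2 : (a:G)⁻¹ * ((b:G)⁻¹ * x * b) * a = ((b:G) * a)⁻¹ * x * ((b:G) * a) := by
      group
    rw [goal2, hba, conj_mul_central hc]
  let ψ : Z →* (G ≃* G) := MonoidHom.mk' (fun a : Z => innerAut (a : G)) hmul
  refine ⟨ψ.range, ?_, ?_⟩
  · ext α
    simp only [MonoidHom.coe_range, Set.mem_range, Set.mem_setOf_eq]
    constructor
    · rintro ⟨a, rfl⟩
      refine ⟨?_, ⟨(a : G), rfl⟩⟩
      intro x y
      have hw : ∀ h : G, tmul ((a:G)⁻¹ * x⁻¹ * a * x) h = 1 := fun h => (hmem _).mp a.2 x h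
      have h1 := tmul_inv_left hw y
      have h2 : ((a:G)⁻¹ * x⁻¹ * a * x)⁻¹ = x⁻¹ * (ψ a) x := by
        show _ = x⁻¹ * innerAut (a:G) x
        rw [hinner]; group
      rwa [h2] at h1
    · rintro ⟨hα, g, rfl⟩
      have hg : g ∈ Z := by
        rw [hmem]
        intro x h
        have h2 : ∀ y : G, tmul (x⁻¹ * g⁻¹ * x * g) y = 1 := by
          intro y
          have h1 := hα x y
          rwa [hinner, show x⁻¹ * (g⁻¹ * x * g) = x⁻¹ * g⁻¹ * x * g by group] at h1
        have h3 := tmul_inv_left h2 h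
        rwa [show (x⁻¹ * g⁻¹ * x * g)⁻¹ = g⁻¹ * x⁻¹ * g * x by group] at h3
      exact ⟨⟨g, hg⟩, rfl⟩
  · have hker : ((Subgroup.center G).subgroupOf Z) = ψ.ker := by
      ext a
      rw [Subgroup.mem_subgroupOf, MonoidHom.mem_ker]
      constructor
      · intro ha
        have hc := Subgroup.mem_center_iff.mp ha
        ext x
        show innerAut (a : G) x = x
        rw [hinner]
        calc (a:G)⁻¹ * x * a = (a:G)⁻¹ * (x * a) := by group
          _ = (a:G)⁻¹ * (a * x) := by rw [hc x]
          _ = x := by group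
      · intro ha
        rw [Subgroup.mem_center_iff]
        intro y
        have hx : innerAut (a : G) y = y := by
          show ψ a y = y
          rw [ha]
          rfl
        rw [hinner] at hx
        calc y * a = (a : G) * ((a:G)⁻¹ * y * a) := by group
          _ = (a : G) * y := by rw [hx]
    refine ⟨(QuotientGroup.quotientMulEquivOfEq hker).trans
      (QuotientGroup.quotientKerEquivRange ψ), ?_⟩
    intro a
    simp only [MulEquiv.trans_apply, QuotientGroup.quotientMulEquivOfEq_mk]
    rfl
end
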